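/- Let B be an absolutely James boundary of a Banach lattice E. If (x_n) is a norm-bounded sequence in E such that |g|(|x_n|) → 0 for all g in B, then |f|(|x_n|) → 0 for all f in E*. -/

import Mathlib

open Filter Topology NormedSpace

/-- `dAbs f x` represents `|f|(x)` for a functional `f` on a Banach lattice,
via the Riesz–Kantorovich formula `|f|(x) = sup { f y : |y| ≤ x }` (for `x ≥ 0`). -/
noncomputable def dAbs {E : Type*} [NormedAddCommGroup E] [Lattice E] [HasSolidNorm E] [IsOrderedAddMonoid E] [NormedSpace ℝ E]
    (f : E →L[ℝ] ℝ) (x : E) : ℝ :=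
  sSup (f '' {y | |y| ≤ x})

/-- A bounded operator between Banach lattices is positive. -/
def IsPosOp {E F : Type*} [NormedAddCommGroup E] [Lattice E] [HasSolidNorm E] [IsOrderedAddMonoid E] [NormedSpace ℝ E]
    [NormedAddCommGroup F] [Lattice F] [HasSolidNorm F] [IsOrderedAddMonoid F] [NormedSpace ℝ F] (T : E →L[ℝ] F) : Prop :=
  ∀ x : E, 0 ≤ x → 0 ≤ T x

/-- The order `T ≤ S` between operators: `T x ≤ S x` for all positive `x`. -/
def OpLe {E F : Type*} [NormedAddCommGroup E] [Lattice E] [HasSolidNorm E] [IsOrderedAddMonoid E] [NormedSpace ℝ E]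
    [NormedAddCommGroup F] [Lattice F] [HasSolidNorm F] [IsOrderedAddMonoid F] [NormedSpace ℝ F] (T S : E →L[ℝ] F) : Prop :=
  ∀ x : E, 0 ≤ x → T x ≤ S x

/-- `m` is the modulus `|T|` of a regular operator `T`: the least upper bound
of `T` and `-T` in the operator order. -/
def IsModulus {E F : Type*} [NormedAddCommGroup E] [Lattice E] [HasSolidNorm E] [IsOrderedAddMonoid E] [NormedSpace ℝ E]
    [NormedAddCommGroup F] [Lattice F] [HasSolidNorm F] [IsOrderedAddMonoid F] [NormedSpace ℝ F] (T m : E →L[ℝ] F) : Prop :=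
  OpLe T m ∧ OpLe (-T) m ∧ ∀ S : E →L[ℝ] F, OpLe T S → OpLe (-T) S → OpLe m S

section LatticeSMul

variable {E : Type*} [NormedAddCommGroup E] [Lattice E] [HasSolidNorm E] [IsOrderedAddMonoid E] [NormedSpace ℝ E]

lemma nonneg_of_add_self {y : E} (h : 0 ≤ y + y) : 0 ≤ y := by
  have h2 : -y ≤ y := by
    have := add_le_add_right h (-y)
    simpa [add_assoc] using this
  have h4 : |y| = y := sup_eq_left.2 h2
  have h3 : 0 ≤ |y| := abs_nonneg y
  rwa [h4] at h3

lemma rsmul_nonneg {c : ℝ} (hc : 0 ≤ c) {y : E} (hy : 0 ≤ y) : 0 ≤ c • y := by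
  have hpow : ∀ k : ℕ, 0 ≤ ((2:ℝ)⁻¹ ^ k) • y := by
    intro k
    induction k with
    | zero => simpa using hy
    | succ k ih =>
      apply nonneg_of_add_self
      have : ((2:ℝ)⁻¹ ^ (k+1)) • y + ((2:ℝ)⁻¹ ^ (k+1)) • y = ((2:ℝ)⁻¹ ^ k) • y := by
        rw [← add_smul]
        congr 1
        ring
      rwa [this]
  have key : ∀ k : ℕ, 0 ≤ ((⌊c * 2 ^ k⌋₊ : ℝ) * (2:ℝ)⁻¹ ^ k) • y := by
    intro k
    have : ((⌊c * 2 ^ k⌋₊ : ℝ) * (2:ℝ)⁻¹ ^ k) • y = ⌊c * 2 ^ k⌋₊ • (((2:ℝ)⁻¹ ^ k) • y) := by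
      rw [← Nat.cast_smul_eq_nsmul ℝ, smul_smul]
    rw [this]
    exact nsmul_nonneg (hpow k) _
  have htend : Tendsto (fun k : ℕ => ((⌊c * 2 ^ k⌋₊ : ℝ) * (2:ℝ)⁻¹ ^ k)) atTop (𝓝 c) := by
    have hlow : ∀ k : ℕ, c - (2:ℝ)⁻¹ ^ k ≤ (⌊c * 2 ^ k⌋₊ : ℝ) * (2:ℝ)⁻¹ ^ k := by
      intro k
      have h2k : (0:ℝ) < 2 ^ k := by positivity
      have := (Nat.sub_one_lt_floor (c * 2 ^ k)).le
      have h1 : (c * 2 ^ k - 1) * (2:ℝ)⁻¹ ^ k ≤ (⌊c * 2 ^ k⌋₊ : ℝ) * (2:ℝ)⁻¹ ^ k := by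
        apply mul_le_mul_of_nonneg_right this (by positivity)
      calc c - (2:ℝ)⁻¹ ^ k = (c * 2 ^ k - 1) * (2:ℝ)⁻¹ ^ k := by
            rw [sub_mul, mul_assoc, ← mul_pow]; norm_num
        _ ≤ _ := h1
    have hhigh : ∀ k : ℕ, (⌊c * 2 ^ k⌋₊ : ℝ) * (2:ℝ)⁻¹ ^ k ≤ c := by
      intro k
      have h2k : (0:ℝ) < 2 ^ k := by positivity
      have := Nat.floor_le (by positivity : (0:ℝ) ≤ c * 2 ^ k)
      calc (⌊c * 2 ^ k⌋₊ : ℝ) * (2:ℝ)⁻¹ ^ k ≤ (c * 2 ^ k) * (2:ℝ)⁻¹ ^ k :=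
            mul_le_mul_of_nonneg_right this (by positivity)
        _ = c := by rw [mul_assoc, ← mul_pow]; norm_num
    have hl : Tendsto (fun k : ℕ => c - (2:ℝ)⁻¹ ^ k) atTop (𝓝 c) := by
      have : Tendsto (fun k : ℕ => ((2:ℝ)⁻¹) ^ k) atTop (𝓝 0) :=
        tendsto_pow_atTop_nhds_zero_of_lt_one (by norm_num) (by norm_num)
      simpa using tendsto_const_nhds.sub this
    exact tendsto_of_tendsto_of_tendsto_of_le_of_le hl tendsto_const_nhds hlow hhigh
  have := htend.smul_const y
  exact isClosed_nonneg.mem_of_tendsto this (Eventually.of_forall key)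

lemma rsmul_mono {c : ℝ} (hc : 0 ≤ c) {a b : E} (h : a ≤ b) : c • a ≤ c • b := by
  have := rsmul_nonneg hc (sub_nonneg.2 h)
  rw [smul_sub] at this
  exact sub_nonneg.1 this

lemma rabs_smul {c : ℝ} (hc : 0 ≤ c) (y : E) : |c • y| = c • |y| := by
  have half : ∀ (d : ℝ), 0 ≤ d → ∀ z : E, |d • z| ≤ d • |z| := by
    intro d hd z
    refine abs_le'.2 ⟨rsmul_mono hd (le_abs_self z), ?_⟩
    rw [← smul_neg]
    exact rsmul_mono hd (neg_le_abs z)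
  rcases eq_or_lt_of_le hc with rfl | hc'
  · simp
  · refine le_antisymm (half c hc y) ?_
    have h1 : |y| ≤ c⁻¹ • |c • y| := by
      have := half c⁻¹ (by positivity) (c • y)
      rwa [smul_smul, inv_mul_cancel₀ hc'.ne', one_smul] at this
    have := rsmul_mono hc h1
    rwa [smul_smul, mul_inv_cancel₀ hc'.ne', one_smul] at this

end LatticeSMul

section DAbsLemmas

variable {E : Type*} [NormedAddCommGroup E] [Lattice E] [HasSolidNorm E] [IsOrderedAddMonoid E] [NormedSpace ℝ E]

lemma dAbs_bddAbove (f : E →L[ℝ] ℝ) (x : E) : BddAbove (f '' {y | |y| ≤ x}) := by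
  refine ⟨‖f‖ * ‖x‖, ?_⟩
  rintro a ⟨y, hy, rfl⟩
  have hx0 : 0 ≤ x := le_trans (abs_nonneg y) hy
  have hyx : ‖y‖ ≤ ‖x‖ := by
    apply HasSolidNorm.solid
    rwa [abs_of_nonneg hx0]
  calc f y ≤ |f y| := le_abs_self _
    _ = ‖f y‖ := (Real.norm_eq_abs _).symm
    _ ≤ ‖f‖ * ‖y‖ := f.le_opNorm y
    _ ≤ ‖f‖ * ‖x‖ := by
        apply mul_le_mul_of_nonneg_left hyx (norm_nonneg f)

lemma zero_mem_dAbsSet {x : E} (hx : 0 ≤ x) : (0:E) ∈ {y : E | |y| ≤ x} := by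
  simpa using hx

lemma dAbsSet_nonempty (f : E →L[ℝ] ℝ) {x : E} (hx : 0 ≤ x) :
    ((⇑f) '' {y : E | |y| ≤ x}).Nonempty :=
  ⟨f 0, 0, zero_mem_dAbsSet hx, rfl⟩

lemma le_dAbs (f : E →L[ℝ] ℝ) {y x : E} (h : |y| ≤ x) : f y ≤ dAbs f x :=
  le_csSup (dAbs_bddAbove f x) ⟨y, h, rfl⟩

lemma dAbs_nonneg' (f : E →L[ℝ] ℝ) {x : E} (hx : 0 ≤ x) : 0 ≤ dAbs f x := by
  have := le_dAbs f (show |(0:E)| ≤ x by simpa using hx)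
  simpa using this

lemma dAbs_le_norm (f : E →L[ℝ] ℝ) {x : E} (hx : 0 ≤ x) : dAbs f x ≤ ‖f‖ * ‖x‖ := by
  apply csSup_le (dAbsSet_nonempty f hx)
  rintro a ⟨y, hy, rfl⟩
  have hyx : ‖y‖ ≤ ‖x‖ := by
    apply HasSolidNorm.solid
    rwa [abs_of_nonneg hx]
  calc f y ≤ |f y| := le_abs_self _
    _ = ‖f y‖ := (Real.norm_eq_abs _).symm
    _ ≤ ‖f‖ * ‖y‖ := f.le_opNorm y
    _ ≤ ‖f‖ * ‖x‖ := mul_le_mul_of_nonneg_left hyx (norm_nonneg f)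

lemma dAbs_mono (f : E →L[ℝ] ℝ) {x x' : E} (hx : 0 ≤ x) (hxx : x ≤ x') :
    dAbs f x ≤ dAbs f x' := by
  apply csSup_le (dAbsSet_nonempty f hx)
  rintro a ⟨y, hy, rfl⟩
  exact le_dAbs f (le_trans hy hxx)

lemma riesz_decomp {y u v : E} (hu : 0 ≤ u) (hv : 0 ≤ v) (h : |y| ≤ u + v) :
    ∃ y₁ y₂ : E, y = y₁ + y₂ ∧ |y₁| ≤ u ∧ |y₂| ≤ v := by
  refine ⟨(y ⊔ -u) ⊓ u, y - (y ⊔ -u) ⊓ u, by abel, ?_, ?_⟩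
  · refine abs_le'.2 ⟨inf_le_right, ?_⟩
    rw [neg_le]
    refine le_inf (le_sup_right) ?_
    exact le_trans (neg_nonpos_of_nonneg hu) hu
  · refine abs_le'.2 ⟨?_, ?_⟩
    · have hy1 : y - v ≤ (y ⊔ -u) ⊓ u := by
        refine le_inf ?_ ?_
        · have h6 : y - v ≤ y := by
            have h7 := add_le_add_left (neg_nonpos_of_nonneg hv) y
            simpa [sub_eq_add_neg] using h7
          exact le_trans h6 le_sup_left
        · rw [sub_le_iff_le_add]
          exact le_trans (le_abs_self y) h
      rw [sub_le_comm]
      exact hy1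
    · rw [neg_sub, sub_le_iff_le_add]
      refine le_trans inf_le_left (sup_le ?_ ?_)
      · exact le_add_of_nonneg_left hv
      · have h1 : -(u + v) ≤ y := le_trans (neg_le_neg h) (neg_le.1 (neg_le_abs y))
        have h2 := add_le_add_right h1 v
        calc -u = v + -(u + v) := by abel
          _ ≤ v + y := h2

lemma dAbs_add (f : E →L[ℝ] ℝ) {u v : E} (hu : 0 ≤ u) (hv : 0 ≤ v) :
    dAbs f (u + v) = dAbs f u + dAbs f v := by
  have huv : 0 ≤ u + v := add_nonneg hu hv
  apply le_antisymm
  · apply csSup_le (dAbsSet_nonempty f huv)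
    rintro a ⟨y, hy, rfl⟩
    obtain ⟨y₁, y₂, rfl, h1, h2⟩ := riesz_decomp hu hv hy
    rw [map_add]
    exact add_le_add (le_dAbs f h1) (le_dAbs f h2)
  · have H : ∀ b ∈ f '' {y : E | |y| ≤ u}, ∀ c ∈ f '' {y : E | |y| ≤ v},
        b + c ≤ dAbs f (u + v) := by
      rintro b ⟨y₁, hy₁, rfl⟩ c ⟨y₂, hy₂, rfl⟩
      rw [← map_add]
      exact le_dAbs f (le_trans (abs_add_le y₁ y₂) (add_le_add hy₁ hy₂))
    have h1 : dAbs f u ≤ dAbs f (u + v) - dAbs f v := by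
      apply csSup_le (dAbsSet_nonempty f hu)
      intro b hb
      rw [le_sub_iff_add_le, add_comm]
      have : dAbs f v ≤ dAbs f (u + v) - b := by
        apply csSup_le (dAbsSet_nonempty f hv)
        intro c hc
        rw [le_sub_iff_add_le, add_comm]
        exact H b hb c hc
      linarith
    linarith

lemma csSup_mul_left (c : ℝ) (hc : 0 < c) {S : Set ℝ} (hne : S.Nonempty)
    (hbdd : BddAbove S) : sSup ((fun t => c * t) '' S) = c * sSup S := by
  have h := isLUB_csSup hne hbdd
  apply IsLUB.csSup_eq
  · constructor
    · rintro a ⟨t, ht, rfl⟩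
      exact mul_le_mul_of_nonneg_left (h.1 ht) hc.le
    · intro b hb
      have : sSup S ≤ b / c := by
        apply h.2
        intro t ht
        rw [le_div_iff₀ hc, mul_comm]
        exact hb ⟨t, ht, rfl⟩
      calc c * sSup S ≤ c * (b / c) := mul_le_mul_of_nonneg_left this hc.le
        _ = b := by field_simp
  · exact hne.image _

lemma dAbs_zero (f : E →L[ℝ] ℝ) : dAbs f 0 = 0 := by
  have hset : {y : E | |y| ≤ 0} = {0} := by
    ext y
    simp only [Set.mem_setOf_eq, Set.mem_singleton_iff]
    constructor
    · intro hy
      have h1 : y ≤ 0 := le_trans (le_abs_self y) hy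
      have h2 : -y ≤ 0 := le_trans (neg_le_abs y) hy
      have h3 : 0 ≤ y := by simpa using neg_nonpos.1 h2
      exact le_antisymm h1 h3
    · rintro rfl; simp
  rw [dAbs, hset]
  simp

lemma dAbs_smul_right (f : E →L[ℝ] ℝ) {c : ℝ} (hc : 0 ≤ c) {x : E} (hx : 0 ≤ x) :
    dAbs f (c • x) = c * dAbs f x := by
  rcases eq_or_lt_of_le hc with rfl | hc'
  · simp [dAbs_zero]
  · have hset : (⇑f) '' {y : E | |y| ≤ c • x} = (fun t => c * t) '' ((⇑f) '' {y : E | |y| ≤ x}) := by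
      ext a
      constructor
      · rintro ⟨y, hy, rfl⟩
        refine ⟨f (c⁻¹ • y), ⟨c⁻¹ • y, ?_, rfl⟩, ?_⟩
        · show |c⁻¹ • y| ≤ x
          rw [rabs_smul (by positivity : (0:ℝ) ≤ c⁻¹)]
          have := rsmul_mono (by positivity : (0:ℝ) ≤ c⁻¹) hy
          rwa [smul_smul, inv_mul_cancel₀ hc'.ne', one_smul] at this
        · show c * f (c⁻¹ • y) = f y
          rw [map_smul, smul_eq_mul, ← mul_assoc, mul_inv_cancel₀ hc'.ne', one_mul]
      · rintro ⟨-, ⟨y, hy, rfl⟩, rfl⟩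
        refine ⟨c • y, ?_, ?_⟩
        · show |c • y| ≤ c • x
          rw [rabs_smul hc]
          exact rsmul_mono hc hy
        · show f (c • y) = c * f y
          rw [map_smul, smul_eq_mul]
    rw [dAbs, hset, csSup_mul_left c hc' (dAbsSet_nonempty f hx) (dAbs_bddAbove f x)]
    rfl

lemma dAbs_smul_left {c : ℝ} (hc : 0 < c) (f : E →L[ℝ] ℝ) {x : E} (hx : 0 ≤ x) :
    dAbs (c • f) x = c * dAbs f x := by
  have hset : (⇑(c • f)) '' {y : E | |y| ≤ x} = (fun t => c * t) '' ((⇑f) '' {y : E | |y| ≤ x}) := by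
    rw [Set.image_image]
    apply Set.image_congr
    intro y _
    simp [smul_eq_mul]
  rw [dAbs, hset, csSup_mul_left c hc (dAbsSet_nonempty f hx) (dAbs_bddAbove f x)]
  rfl

lemma dAbs_lipschitz (f : E →L[ℝ] ℝ) {u v : E} (hu : 0 ≤ u) (hv : 0 ≤ v) :
    dAbs f u ≤ dAbs f v + ‖f‖ * ‖u - v‖ := by
  have h1 : u ≤ v + |u - v| := by
    have := le_abs_self (u - v)
    have := add_le_add_right this v
    simpa using this
  calc dAbs f u ≤ dAbs f (v + |u - v|) := dAbs_mono f hu h1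
    _ = dAbs f v + dAbs f |u - v| := dAbs_add f hv (abs_nonneg _)
    _ ≤ dAbs f v + ‖f‖ * ‖(|u - v|)‖ := by
        have := dAbs_le_norm f (abs_nonneg (u - v))
        linarith
    _ = dAbs f v + ‖f‖ * ‖u - v‖ := by rw [norm_abs_eq_norm]

lemma dAbs_tsum [CompleteSpace E] (f : E →L[ℝ] ℝ) (l : ℕ → ℝ) (u : ℕ → E) (C : ℝ)
    (hl : ∀ k, 0 ≤ l k) (hls : Summable l) (hu : ∀ k, 0 ≤ u k) (hC : ∀ k, ‖u k‖ ≤ C) :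
    dAbs f (∑' k, l k • u k) = ∑' k, l k * dAbs f (u k) := by
  have hC0 : 0 ≤ C := le_trans (norm_nonneg _) (hC 0)
  have hsummE : Summable (fun k => l k • u k) := by
    apply Summable.of_norm_bounded (g := fun k => l k * C) (hls.mul_right C)
    intro k
    rw [norm_smul, Real.norm_eq_abs, abs_of_nonneg (hl k)]
    exact mul_le_mul_of_nonneg_left (hC k) (hl k)
  set z := ∑' k, l k • u k with hz_def
  have hterm : ∀ k, 0 ≤ l k • u k := fun k => rsmul_nonneg (hl k) (hu k)
  have hz : 0 ≤ z := tsum_nonneg hterm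
  have hpartial_nonneg : ∀ K, 0 ≤ ∑ k ∈ Finset.range K, l k • u k := fun K =>
    Finset.sum_nonneg (fun k _ => hterm k)
  have hpart : ∀ K, dAbs f (∑ k ∈ Finset.range K, l k • u k)
      = ∑ k ∈ Finset.range K, l k * dAbs f (u k) := by
    intro K
    induction K with
    | zero => simpa using dAbs_zero f
    | succ K ih =>
      rw [Finset.sum_range_succ, Finset.sum_range_succ, dAbs_add f (hpartial_nonneg K) (hterm K),
        ih, dAbs_smul_right f (hl K) (hu K)]
  have h1 : Tendsto (fun K => ∑ k ∈ Finset.range K, l k • u k) atTop (𝓝 z) :=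
    hsummE.hasSum.tendsto_sum_nat
  have h2 : Tendsto (fun K => dAbs f (∑ k ∈ Finset.range K, l k • u k)) atTop (𝓝 (dAbs f z)) := by
    have hdiff : Tendsto (fun K => dAbs f (∑ k ∈ Finset.range K, l k • u k) - dAbs f z)
        atTop (𝓝 0) := by
      apply squeeze_zero_norm (a := fun K => ‖f‖ * ‖(∑ k ∈ Finset.range K, l k • u k) - z‖)
      · intro K
        rw [Real.norm_eq_abs, abs_le]
        constructor
        · have h5 := dAbs_lipschitz f hz (hpartial_nonneg K)
          rw [norm_sub_rev] at h5
          linarith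
        · have h5 := dAbs_lipschitz f (hpartial_nonneg K) hz
          linarith
      · have : Tendsto (fun K => (∑ k ∈ Finset.range K, l k • u k) - z) atTop (𝓝 0) := by
          simpa using h1.sub (tendsto_const_nhds (x := z))
        have := this.norm
        simp only [norm_zero] at this
        simpa using this.const_mul ‖f‖
    have := hdiff.add (tendsto_const_nhds (x := dAbs f z))
    simpa using this
  rw [show (fun K => dAbs f (∑ k ∈ Finset.range K, l k • u k))
      = (fun K => ∑ k ∈ Finset.range K, l k * dAbs f (u k)) from funext hpart] at h2
  have hsum2 : Summable (fun k => l k * dAbs f (u k)) := by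
    apply Summable.of_nonneg_of_le
      (fun k => mul_nonneg (hl k) (dAbs_nonneg' f (hu k)))
      (fun k => ?_) (hls.mul_right (‖f‖ * C))
    have h3 : dAbs f (u k) ≤ ‖f‖ * C := by
      calc dAbs f (u k) ≤ ‖f‖ * ‖u k‖ := dAbs_le_norm f (hu k)
        _ ≤ ‖f‖ * C := mul_le_mul_of_nonneg_left (hC k) (norm_nonneg f)
    calc l k * dAbs f (u k) ≤ l k * (‖f‖ * C) :=
      mul_le_mul_of_nonneg_left h3 (hl k)
      _ = l k * (‖f‖ * C) := rfl
  exact (tendsto_nhds_unique hsum2.hasSum.tendsto_sum_nat h2).symm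

end DAbsLemmas

section Simons

variable {X : Type*}

/-- Admissible convex-series coefficients supported on `[k, ∞)`. -/
def SAdm (k : ℕ) (l : ℕ → ℝ) : Prop :=
  (∀ n, 0 ≤ l n) ∧ HasSum l 1 ∧ ∀ j < k, l j = 0

/-- Convex series combinations of the tail `(f_n)_{n ≥ k}`. -/
def SCvx (f : ℕ → X → ℝ) (k : ℕ) (u : X → ℝ) : Prop :=
  ∃ l, SAdm k l ∧ ∀ x, u x = ∑' n, l n * f n x

lemma sadm_single (k : ℕ) : SAdm k (fun n => if n = k then 1 else 0) := by
  refine ⟨fun n => ?_, hasSum_ite_eq k 1, fun j hj => ?_⟩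
  · dsimp only
    split <;> norm_num
  · dsimp only
    rw [if_neg (Nat.ne_of_lt hj)]

lemma scvx_single (f : ℕ → X → ℝ) (k : ℕ) : SCvx f k (f k) := by
  refine ⟨_, sadm_single k, fun x => ?_⟩
  rw [tsum_eq_single k]
  · simp
  · intro n hn
    simp [hn]

lemma scvx_mono (f : ℕ → X → ℝ) {k k' : ℕ} (h : k' ≤ k) {u : X → ℝ}
    (hu : SCvx f k u) : SCvx f k' u := by
  obtain ⟨l, ⟨h1, h2, h3⟩, h4⟩ := hu
  exact ⟨l, ⟨h1, h2, fun j hj => h3 j (lt_of_lt_of_le hj h)⟩, h4⟩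

lemma sadm_summable_mul {k : ℕ} {l : ℕ → ℝ} (hA : SAdm k l) {M : ℝ}
    {f : ℕ → X → ℝ} (hM : ∀ n x, |f n x| ≤ M) (x : X) :
    Summable (fun n => l n * f n x) := by
  apply Summable.of_abs
  apply Summable.of_nonneg_of_le (fun n => abs_nonneg _) (fun n => ?_)
    (hA.2.1.summable.mul_right M)
  rw [abs_mul, abs_of_nonneg (hA.1 n)]
  exact mul_le_mul_of_nonneg_left (hM n x) (hA.1 n)

lemma scvx_bound {f : ℕ → X → ℝ} {M : ℝ} (hM : ∀ n x, |f n x| ≤ M) {k : ℕ} {u : X → ℝ}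
    (hu : SCvx f k u) (x : X) : |u x| ≤ M := by
  obtain ⟨l, hA, hrep⟩ := hu
  rw [hrep x]
  have hsum := sadm_summable_mul hA hM x
  have habs : Summable fun n => ‖l n * f n x‖ := by
    simpa only [Real.norm_eq_abs] using hsum.abs
  calc |∑' n, l n * f n x| = ‖∑' n, l n * f n x‖ := (Real.norm_eq_abs _).symm
    _ ≤ ∑' n, ‖l n * f n x‖ := norm_tsum_le_tsum_norm habs
    _ ≤ ∑' n, l n * M := by
        apply Summable.tsum_le_tsum _ habs (hA.2.1.summable.mul_right M)
        intro n
        rw [Real.norm_eq_abs, abs_mul, abs_of_nonneg (hA.1 n)]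
        exact mul_le_mul_of_nonneg_left (hM n x) (hA.1 n)
    _ = M := by rw [tsum_mul_right, hA.2.1.tsum_eq, one_mul]

lemma scvx_mix {f : ℕ → X → ℝ} {M : ℝ} (hM : ∀ n x, |f n x| ≤ M) {m : ℕ} (μ : ℕ → ℝ)
    (hμ0 : ∀ j, 0 ≤ μ j) (hμ1 : HasSum μ 1) (u : ℕ → X → ℝ) (hu : ∀ j, SCvx f m (u j)) :
    SCvx f m (fun x => ∑' j, μ j * u j x) := by
  choose l hl hrep using hu
  set F : ℕ × ℕ → ℝ := fun p => μ p.1 * l p.1 p.2 with hF_def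
  have hF0 : ∀ p, 0 ≤ F p := fun p => mul_nonneg (hμ0 _) ((hl p.1).1 _)
  have hFs : Summable F := by
    rw [summable_prod_of_nonneg hF0]
    constructor
    · intro j
      exact ((hl j).2.1.summable.mul_left (μ j))
    · have : (fun j => ∑' n, F (j, n)) = μ := by
        funext j
        show ∑' n, μ j * l j n = μ j
        rw [tsum_mul_left, (hl j).2.1.tsum_eq, mul_one]
      rw [this]
      exact hμ1.summable
  have hΛs : Summable (fun n => ∑' j, F (j, n)) := by
    have := hFs.prod_symm.prod
    simpa using this
  refine ⟨fun n => ∑' j, μ j * l j n, ⟨?_, ?_, ?_⟩, ?_⟩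
  · intro n
    exact tsum_nonneg fun j => mul_nonneg (hμ0 j) ((hl j).1 n)
  · have hcomm : ∑' (n) (j), F (j, n) = ∑' (j) (n), F (j, n) :=
      Summable.tsum_comm' (f := fun j n => F (j, n)) (by exact hFs)
        (fun j => by exact (hl j).2.1.summable.mul_left (μ j))
        (fun n => by exact hFs.prod_symm.prod_factor n)
    have htot : ∑' n, (∑' j, F (j, n)) = 1 := by
      rw [hcomm]
      calc ∑' j, ∑' n, F (j, n) = ∑' j, μ j := by
            congr 1
            funext j
            show ∑' n, μ j * l j n = μ j
            rw [tsum_mul_left, (hl j).2.1.tsum_eq, mul_one]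
        _ = 1 := hμ1.tsum_eq
    exact (Summable.hasSum_iff hΛs).2 htot
  · intro j hj
    have : ∀ i : ℕ, μ i * l i j = 0 := fun i => by rw [(hl i).2.2 j hj, mul_zero]
    simp [this]
  · intro x
    dsimp only
    refine Eq.symm ?_
    have hG : Summable (fun p : ℕ × ℕ => F p * f p.2 x) := by
      apply Summable.of_abs
      apply Summable.of_nonneg_of_le (fun p => abs_nonneg _) (fun p => ?_) (hFs.mul_right M)
      rw [abs_mul, abs_of_nonneg (hF0 p)]
      exact mul_le_mul_of_nonneg_left (hM p.2 x) (hF0 p)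
    calc ∑' n, (∑' j, μ j * l j n) * f n x
        = ∑' n, ∑' j, F (j, n) * f n x := by
          congr 1
          funext n
          rw [tsum_mul_right]
      _ = ∑' j, ∑' n, F (j, n) * f n x :=
          Summable.tsum_comm' (f := fun j n => F (j, n) * f n x) (by exact hG)
            (fun j => by exact hG.prod_factor j)
            (fun n => by exact hG.prod_symm.prod_factor n)
      _ = ∑' j, μ j * u j x := by
          congr 1
          funext j
          show ∑' n, μ j * l j n * f n x = μ j * u j x
          calc ∑' n, μ j * l j n * f n x = ∑' n, μ j * (l j n * f n x) := by
                congr 1; funext n; ring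
            _ = μ j * ∑' n, l j n * f n x := tsum_mul_left
            _ = μ j * u j x := by rw [← hrep j x]
  
lemma schoice_ex [Nonempty X] (f : ℕ → X → ℝ) (M ε : ℝ) (hM : ∀ n x, |f n x| ≤ M)
    (hε : 0 < ε) (k : ℕ) (s : X → ℝ) :
    ∃ u, SCvx f k u ∧ ((∀ x, |s x| ≤ M) → ∀ v, SCvx f k v →
      (⨆ x, (s x + (2:ℝ)⁻¹ ^ k * u x)) ≤ (⨆ x, (s x + (2:ℝ)⁻¹ ^ k * v x)) + ε * (4:ℝ)⁻¹ ^ (k+1)) := by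
  by_cases hs : ∀ x, |s x| ≤ M
  · have hp1 : ((2:ℝ)⁻¹) ^ k ≤ 1 := by
      calc ((2:ℝ)⁻¹) ^ k ≤ 1 ^ k := pow_le_pow_left₀ (by norm_num) (by norm_num) k
        _ = 1 := one_pow k
    have hub : ∀ v, SCvx f k v → ∀ x, |s x + (2:ℝ)⁻¹ ^ k * v x| ≤ M + M := by
      intro v hv x
      have h5 : |(2:ℝ)⁻¹ ^ k * v x| ≤ M := by
        rw [abs_mul, abs_of_nonneg (by positivity : (0:ℝ) ≤ (2:ℝ)⁻¹ ^ k)]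
        calc (2:ℝ)⁻¹ ^ k * |v x| ≤ 1 * M := by
              apply mul_le_mul hp1 (scvx_bound hM hv x) (abs_nonneg _) (by norm_num)
          _ = M := one_mul M
      calc |s x + (2:ℝ)⁻¹ ^ k * v x| ≤ |s x| + |(2:ℝ)⁻¹ ^ k * v x| := abs_add_le _ _
        _ ≤ M + M := add_le_add (hs x) h5
    have hBdd : ∀ v, SCvx f k v → BddAbove (Set.range fun x => s x + (2:ℝ)⁻¹ ^ k * v x) := by
      intro v hv
      refine ⟨M + M, ?_⟩
      rintro a ⟨x, rfl⟩
      exact (abs_le.1 (hub v hv x)).2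
    have hLbd : ∀ v, SCvx f k v → -(M + M) ≤ ⨆ x, (s x + (2:ℝ)⁻¹ ^ k * v x) := by
      intro v hv
      refine le_trans ?_ (le_ciSup (hBdd v hv) (Classical.arbitrary X))
      exact (abs_le.1 (hub v hv (Classical.arbitrary X))).1
    set T := (fun v => ⨆ x, (s x + (2:ℝ)⁻¹ ^ k * v x)) '' {v | SCvx f k v} with hT_def
    have hTne : T.Nonempty := ⟨_, ⟨f k, scvx_single f k, rfl⟩⟩
    have hTbdd : BddBelow T := by
      refine ⟨-(M + M), ?_⟩
      rintro t ⟨v, hv, rfl⟩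
      exact hLbd v hv
    have hδ : 0 < ε * (4:ℝ)⁻¹ ^ (k+1) := by positivity
    obtain ⟨t, ⟨u, hu, rfl⟩, ht⟩ :=
      exists_lt_of_csInf_lt hTne (lt_add_of_pos_right (sInf T) hδ)
    refine ⟨u, hu, fun _ v hv => ?_⟩
    have h1 : sInf T ≤ ⨆ x, (s x + (2:ℝ)⁻¹ ^ k * v x) := csInf_le hTbdd ⟨v, hv, rfl⟩
    linarith
  · exact ⟨f k, scvx_single f k, fun h => absurd h hs⟩

variable [Nonempty X]

/-- The partial sums `σ_k` of Simons' construction. -/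
noncomputable def ssig (f : ℕ → X → ℝ) (M ε : ℝ) (hM : ∀ n x, |f n x| ≤ M) (hε : 0 < ε) :
    ℕ → X → ℝ
  | 0 => fun _ => 0
  | (k+1) => fun x => ssig f M ε hM hε k x +
      (2:ℝ)⁻¹ ^ (k+1) * Classical.choose (schoice_ex f M ε hM hε k (ssig f M ε hM hε k)) x

/-- The chosen near-optimal convex blocks `g_k`. -/
noncomputable def sg (f : ℕ → X → ℝ) (M ε : ℝ) (hM : ∀ n x, |f n x| ≤ M) (hε : 0 < ε)
    (k : ℕ) : X → ℝ :=
  Classical.choose (schoice_ex f M ε hM hε k (ssig f M ε hM hε k))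

lemma ssig_succ (f : ℕ → X → ℝ) (M ε : ℝ) (hM : ∀ n x, |f n x| ≤ M) (hε : 0 < ε)
    (k : ℕ) (x : X) :
    ssig f M ε hM hε (k+1) x = ssig f M ε hM hε k x + (2:ℝ)⁻¹ ^ (k+1) * sg f M ε hM hε k x := rfl

lemma sg_cvx (f : ℕ → X → ℝ) (M ε : ℝ) (hM : ∀ n x, |f n x| ≤ M) (hε : 0 < ε) (k : ℕ) :
    SCvx f k (sg f M ε hM hε k) :=
  (Classical.choose_spec (schoice_ex f M ε hM hε k (ssig f M ε hM hε k))).1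

lemma ssig_bound (f : ℕ → X → ℝ) (M ε : ℝ) (hM : ∀ n x, |f n x| ≤ M) (hε : 0 < ε) (k : ℕ)
    (x : X) : |ssig f M ε hM hε k x| ≤ M * (1 - (2:ℝ)⁻¹ ^ k) := by
  induction k with
  | zero => simp [ssig]
  | succ k ih =>
    rw [ssig_succ]
    have hg := scvx_bound hM (sg_cvx f M ε hM hε k) x
    have hM0 : 0 ≤ M := le_trans (abs_nonneg _) (hM 0 x)
    have h1 : |ssig f M ε hM hε k x + (2:ℝ)⁻¹ ^ (k+1) * sg f M ε hM hε k x|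
        ≤ |ssig f M ε hM hε k x| + (2:ℝ)⁻¹ ^ (k+1) * |sg f M ε hM hε k x| := by
      calc |ssig f M ε hM hε k x + (2:ℝ)⁻¹ ^ (k+1) * sg f M ε hM hε k x|
          ≤ |ssig f M ε hM hε k x| + |(2:ℝ)⁻¹ ^ (k+1) * sg f M ε hM hε k x| := abs_add_le _ _
        _ = |ssig f M ε hM hε k x| + (2:ℝ)⁻¹ ^ (k+1) * |sg f M ε hM hε k x| := by
            rw [abs_mul, abs_of_nonneg (by positivity : (0:ℝ) ≤ (2:ℝ)⁻¹ ^ (k+1))]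
    have h2 : (2:ℝ)⁻¹ ^ (k+1) * |sg f M ε hM hε k x| ≤ (2:ℝ)⁻¹ ^ (k+1) * M :=
      mul_le_mul_of_nonneg_left hg (by positivity)
    have h3 : M * (1 - (2:ℝ)⁻¹ ^ k) + (2:ℝ)⁻¹ ^ (k+1) * M = M * (1 - (2:ℝ)⁻¹ ^ (k+1)) := by
      ring
    linarith
  
lemma ssig_boundM (f : ℕ → X → ℝ) (M ε : ℝ) (hM : ∀ n x, |f n x| ≤ M) (hε : 0 < ε) (k : ℕ)
    (x : X) : |ssig f M ε hM hε k x| ≤ M := by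
  have h1 := ssig_bound f M ε hM hε k x
  have hM0 : 0 ≤ M := le_trans (abs_nonneg _) (hM 0 x)
  have h2 : M * (1 - (2:ℝ)⁻¹ ^ k) ≤ M := by
    nlinarith [pow_nonneg (by norm_num : (0:ℝ) ≤ (2:ℝ)⁻¹) k]
  linarith

lemma sg_opt (f : ℕ → X → ℝ) (M ε : ℝ) (hM : ∀ n x, |f n x| ≤ M) (hε : 0 < ε) (k : ℕ) :
    ∀ v, SCvx f k v →
      (⨆ x, (ssig f M ε hM hε k x + (2:ℝ)⁻¹ ^ k * sg f M ε hM hε k x)) ≤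
      (⨆ x, (ssig f M ε hM hε k x + (2:ℝ)⁻¹ ^ k * v x)) + ε * (4:ℝ)⁻¹ ^ (k+1) :=
  (Classical.choose_spec (schoice_ex f M ε hM hε k (ssig f M ε hM hε k))).2
    (ssig_boundM f M ε hM hε k)

theorem simons_aux {X : Type*} [Nonempty X] (f : ℕ → X → ℝ) (B : Set X) (M r ε : ℝ)
    (hε : 0 < ε) (hM : ∀ n x, |f n x| ≤ M)
    (hattain : ∀ l : ℕ → ℝ, (∀ n, 0 ≤ l n) → HasSum l 1 →
      ∃ b ∈ B, ∀ y, (∑' n, l n * f n y) ≤ ∑' n, l n * f n b)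
    (hr : ∀ l : ℕ → ℝ, (∀ n, 0 ≤ l n) → HasSum l 1 → ∃ y, r ≤ ∑' n, l n * f n y) :
    ∃ b ∈ B, ∀ a N, (∀ n, N ≤ n → f n b ≤ a) → r - ε ≤ a := by
  classical
  have hgcvx : ∀ k, SCvx f k (sg f M ε hM hε k) := sg_cvx f M ε hM hε
  have hgeo : HasSum (fun i : ℕ => (2:ℝ)⁻¹ ^ (i+1)) 1 := by
    have h1 := (hasSum_geometric_of_lt_one (by norm_num : (0:ℝ) ≤ 2⁻¹)
      (by norm_num : (2:ℝ)⁻¹ < 1)).mul_left (2:ℝ)⁻¹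
    have h2 : ((2:ℝ)⁻¹ * ((1:ℝ) - 2⁻¹)⁻¹) = 1 := by norm_num
    rw [h2] at h1
    have h3 : (fun i : ℕ => (2:ℝ)⁻¹ ^ (i+1)) = fun i : ℕ => (2:ℝ)⁻¹ * (2:ℝ)⁻¹ ^ i := by
      funext i
      rw [pow_succ]
      ring
    rw [h3]
    exact h1
  set hseq : ℕ → X → ℝ := fun k x => ∑' i, (2:ℝ)⁻¹ ^ (i+1) * sg f M ε hM hε (k+i) x
    with hhseq_def
  have hhscvx : ∀ k, SCvx f k (hseq k) := by
    intro k
    have := scvx_mix hM (m := k) (fun i => (2:ℝ)⁻¹ ^ (i+1)) (fun i => by positivity) hgeo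
      (fun i => sg f M ε hM hε (k+i))
      (fun i => scvx_mono f (Nat.le_add_right k i) (hgcvx (k+i)))
    simpa only [hhseq_def] using this
  have hsummg : ∀ k x, Summable (fun i => (2:ℝ)⁻¹ ^ (i+1) * sg f M ε hM hε (k+i) x) := by
    intro k x
    apply Summable.of_abs
    apply Summable.of_nonneg_of_le (fun i => abs_nonneg _) (fun i => ?_)
      (hgeo.summable.mul_right M)
    rw [abs_mul, abs_of_nonneg (by positivity : (0:ℝ) ≤ (2:ℝ)⁻¹ ^ (i+1))]
    exact mul_le_mul_of_nonneg_left (scvx_bound hM (hgcvx (k+i)) x) (by positivity)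
  have hsplit : ∀ k x, hseq k x = 2⁻¹ * sg f M ε hM hε k x + 2⁻¹ * hseq (k+1) x := by
    intro k x
    rw [hhseq_def]
    dsimp only
    rw [Summable.tsum_eq_zero_add (hsummg k x)]
    congr 1
    · norm_num
    · rw [← tsum_mul_left]
      congr 1
      funext i
      have h4 : k + (i+1) = (k+1) + i := by ring
      rw [h4, pow_succ]
      ring
  have hσhs : ∀ k x, hseq 0 x = ssig f M ε hM hε k x + (2:ℝ)⁻¹ ^ k * hseq k x := by
    intro k
    induction k with
    | zero =>
      intro x
      simp [ssig]
    | succ k ih =>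
      intro x
      rw [ih x, hsplit k x, ssig_succ]
      ring
  obtain ⟨l0, hl0, hrep0⟩ := hhscvx 0
  obtain ⟨b, hbB, hbmax⟩ := hattain l0 hl0.1 hl0.2.1
  have hmax : ∀ y, hseq 0 y ≤ hseq 0 b := by
    intro y
    have h5 := hbmax y
    rw [← hrep0 y, ← hrep0 b] at h5
    exact h5
  have hr0 : r ≤ hseq 0 b := by
    obtain ⟨y, hy⟩ := hr l0 hl0.1 hl0.2.1
    rw [← hrep0 y] at hy
    exact le_trans hy (hmax y)
  refine ⟨b, hbB, ?_⟩
  have hτM : ∀ k, hseq k b ≤ M := fun k => (abs_le.1 (scvx_bound hM (hhscvx k) b)).2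
  have key1 : ∀ k, sg f M ε hM hε k b ≤ hseq k b + ε * (2:ℝ)⁻¹ ^ k / 4 := by
    intro k
    have hopt := sg_opt f M ε hM hε k (hseq k) (hhscvx k)
    have hposk : (0:ℝ) < (2:ℝ)⁻¹ ^ k := by positivity
    have hp1 : ((2:ℝ)⁻¹ : ℝ) ^ k ≤ 1 := by
      calc ((2:ℝ)⁻¹ : ℝ) ^ k ≤ 1 ^ k := pow_le_pow_left₀ (by norm_num) (by norm_num) k
        _ = 1 := one_pow k
    have hM0 : 0 ≤ M := le_trans (abs_nonneg _) (hM 0 b)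
    have hfun : (fun x => ssig f M ε hM hε k x + (2:ℝ)⁻¹ ^ k * hseq k x) = hseq 0 := by
      funext y
      rw [← hσhs k y]
    have hsup0 : (⨆ x, (ssig f M ε hM hε k x + (2:ℝ)⁻¹ ^ k * hseq k x)) = hseq 0 b := by
      rw [show (fun x => ssig f M ε hM hε k x + (2:ℝ)⁻¹ ^ k * hseq k x) = hseq 0 from hfun]
      apply le_antisymm
      · exact ciSup_le hmax
      · refine le_ciSup ⟨hseq 0 b, ?_⟩ b
        rintro t ⟨y, rfl⟩
        exact hmax y
    have hLHSbdd : BddAbove (Set.range fun y =>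
        ssig f M ε hM hε k y + (2:ℝ)⁻¹ ^ k * sg f M ε hM hε k y) := by
      refine ⟨M + M, ?_⟩
      rintro t ⟨y, rfl⟩
      have h1 := (abs_le.1 (ssig_boundM f M ε hM hε k y)).2
      have h2 := (abs_le.1 (scvx_bound hM (hgcvx k) y)).2
      have h6 : (2:ℝ)⁻¹ ^ k * sg f M ε hM hε k y ≤ M := by
        calc (2:ℝ)⁻¹ ^ k * sg f M ε hM hε k y ≤ (2:ℝ)⁻¹ ^ k * M :=
              mul_le_mul_of_nonneg_left h2 hposk.le
          _ ≤ 1 * M := mul_le_mul_of_nonneg_right hp1 hM0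
          _ = M := one_mul M
      dsimp only
      linarith
    have hvb : ssig f M ε hM hε k b + (2:ℝ)⁻¹ ^ k * sg f M ε hM hε k b ≤
        ⨆ y, (ssig f M ε hM hε k y + (2:ℝ)⁻¹ ^ k * sg f M ε hM hε k y) :=
      le_ciSup hLHSbdd b
    have hτval : hseq 0 b = ssig f M ε hM hε k b + (2:ℝ)⁻¹ ^ k * hseq k b := hσhs k b
    have hdk : (2:ℝ)⁻¹ ^ k * (ε * (2:ℝ)⁻¹ ^ k / 4) = ε * (4:ℝ)⁻¹ ^ (k+1) := by
      have h7 : ((4:ℝ))⁻¹ ^ k = (2:ℝ)⁻¹ ^ k * (2:ℝ)⁻¹ ^ k := by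
        rw [← mul_pow]
        norm_num
      rw [pow_succ, h7]
      ring
    have hchain : ssig f M ε hM hε k b + (2:ℝ)⁻¹ ^ k * sg f M ε hM hε k b ≤
        ssig f M ε hM hε k b + (2:ℝ)⁻¹ ^ k * hseq k b + ε * (4:ℝ)⁻¹ ^ (k+1) := by
      calc ssig f M ε hM hε k b + (2:ℝ)⁻¹ ^ k * sg f M ε hM hε k b
          ≤ ⨆ y, (ssig f M ε hM hε k y + (2:ℝ)⁻¹ ^ k * sg f M ε hM hε k y) := hvb
        _ ≤ (⨆ y, (ssig f M ε hM hε k y + (2:ℝ)⁻¹ ^ k * hseq k y)) + ε * (4:ℝ)⁻¹ ^ (k+1) :=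
            hopt
        _ = hseq 0 b + ε * (4:ℝ)⁻¹ ^ (k+1) := by rw [hsup0]
        _ = ssig f M ε hM hε k b + (2:ℝ)⁻¹ ^ k * hseq k b + ε * (4:ℝ)⁻¹ ^ (k+1) := by
            rw [hτval]
    have h6 : (2:ℝ)⁻¹ ^ k * sg f M ε hM hε k b ≤
        (2:ℝ)⁻¹ ^ k * (hseq k b + ε * (2:ℝ)⁻¹ ^ k / 4) := by
      rw [mul_add, hdk]
      linarith
    exact le_of_mul_le_mul_left h6 hposk
  have key2 : ∀ k, hseq k b = 2⁻¹ * sg f M ε hM hε k b + 2⁻¹ * hseq (k+1) b :=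
    fun k => hsplit k b
  have key3 : ∀ k, hseq k b - ε * (2:ℝ)⁻¹ ^ k / 4 ≤ hseq (k+1) b := by
    intro k
    have h1 := key1 k
    have h2 := key2 k
    linarith
  have key4 : ∀ k, r - ε/2 ≤ hseq k b := by
    have main : ∀ k, r - (ε/2) * (1 - (2:ℝ)⁻¹ ^ k) ≤ hseq k b := by
      intro k
      induction k with
      | zero => simpa using hr0
      | succ k ih =>
        have h3 := key3 k
        have expand : (ε/2) * (1 - (2:ℝ)⁻¹ ^ (k+1))
            = (ε/2) * (1 - (2:ℝ)⁻¹ ^ k) + ε * (2:ℝ)⁻¹ ^ k / 4 := by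
          rw [pow_succ]
          ring
        linarith
    intro k
    have h8 := main k
    have hp : (0:ℝ) ≤ (2:ℝ)⁻¹ ^ k := by positivity
    nlinarith
  intro a N haN
  by_contra hcon
  push_neg at hcon
  have hga : ∀ k, N ≤ k → sg f M ε hM hε k b ≤ a := by
    intro k hk
    obtain ⟨l, hlA, hlrep⟩ := hgcvx k
    rw [hlrep b]
    have hsumf : Summable (fun n => l n * f n b) := sadm_summable_mul hlA hM b
    have hsuma : Summable (fun n => l n * a) := hlA.2.1.summable.mul_right a
    have h9 : ∑' n, l n * f n b ≤ ∑' n, l n * a := by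
      apply Summable.tsum_le_tsum _ hsumf hsuma
      intro n
      rcases lt_or_ge n k with hn | hn
      · rw [hlA.2.2 n hn]
        simp
      · exact mul_le_mul_of_nonneg_left (haN n (le_trans hk hn)) (hlA.1 n)
    calc ∑' n, l n * f n b ≤ ∑' n, l n * a := h9
      _ = 1 * a := by rw [tsum_mul_right, hlA.2.1.tsum_eq]
      _ = a := one_mul a
  have hstep : ∀ k, N ≤ k → hseq k b + ε/2 ≤ hseq (k+1) b := by
    intro k hk
    have h2 := key2 k
    have h4 := key4 k
    have h5 := hga k hk
    linarith
  have hgrow : ∀ j : ℕ, hseq N b + j * (ε/2) ≤ hseq (N + j) b := by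
    intro j
    induction j with
    | zero => simp
    | succ j ih =>
      have h10 := hstep (N + j) (Nat.le_add_right N j)
      have h11 : (N + (j+1)) = (N + j) + 1 := by ring
      rw [h11]
      push_cast
      calc hseq N b + ((j:ℝ)+1) * (ε/2) = (hseq N b + (j:ℝ) * (ε/2)) + ε/2 := by ring
        _ ≤ hseq (N+j) b + ε/2 := by linarith
        _ ≤ hseq ((N+j)+1) b := h10
  obtain ⟨j, hj⟩ := exists_nat_gt ((M - hseq N b) / (ε/2))
  have h7 := hgrow j
  have h8 := hτM (N + j)
  have h9 : (M - hseq N b)/(ε/2) * (ε/2) < j * (ε/2) :=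
    mul_lt_mul_of_pos_right hj (by positivity)
  rw [div_mul_cancel₀ _ (by positivity : (ε/2:ℝ) ≠ 0)] at h9
  linarith

end Simons

/-- If `B` is an absolutely James boundary of `E` and `(x_n)` is a bounded sequence with
`|g|(|x_n|) → 0` for all `g ∈ B`, then `|f|(|x_n|) → 0` for all `f ∈ E*`. -/
theorem absJamesBoundary_null {E : Type*} [NormedAddCommGroup E] [Lattice E] [HasSolidNorm E] [IsOrderedAddMonoid E]
    [NormedSpace ℝ E] [CompleteSpace E]
    (B : Set (E →L[ℝ] ℝ)) (hB1 : ∀ g ∈ B, ‖g‖ ≤ 1)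
    (hB : ∀ x : E, ∃ g ∈ B, dAbs g |x| = ‖x‖)
    (x : ℕ → E) (hbdd : ∃ C : ℝ, ∀ n, ‖x n‖ ≤ C)
    (h : ∀ g ∈ B, Tendsto (fun n => dAbs g |x n|) atTop (𝓝 0)) :
    ∀ f : E →L[ℝ] ℝ, Tendsto (fun n => dAbs f |x n|) atTop (𝓝 0) := by
  classical
  obtain ⟨C₀, hC₀⟩ := hbdd
  set C := max C₀ 0 with hC_def
  have hCx : ∀ n, ‖x n‖ ≤ C := fun n => le_trans (hC₀ n) (le_max_left _ _)
  have hC0 : 0 ≤ C := le_max_right _ _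
  suffices H : ∀ f : E →L[ℝ] ℝ, ‖f‖ ≤ 1 → Tendsto (fun n => dAbs f |x n|) atTop (𝓝 0) by
    intro f
    have hpos : (0:ℝ) < ‖f‖ + 1 := by positivity
    have hinv : (0:ℝ) < (‖f‖ + 1)⁻¹ := by positivity
    have h1 : ‖(‖f‖ + 1)⁻¹ • f‖ ≤ 1 := by
      refine le_trans (ContinuousLinearMap.opNorm_smul_le _ _) ?_
      rw [Real.norm_eq_abs, abs_of_nonneg hinv.le]
      have h2 : ‖f‖ ≤ ‖f‖ + 1 := by linarith
      calc (‖f‖ + 1)⁻¹ * ‖f‖ ≤ (‖f‖ + 1)⁻¹ * (‖f‖ + 1) :=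
            mul_le_mul_of_nonneg_left h2 hinv.le
        _ = 1 := inv_mul_cancel₀ hpos.ne'
    have h2 := H _ h1
    have h3 : (fun n => dAbs f |x n|)
        = fun n => (‖f‖ + 1) * dAbs ((‖f‖ + 1)⁻¹ • f) |x n| := by
      funext n
      rw [dAbs_smul_left hinv f (abs_nonneg (x n)), ← mul_assoc,
        mul_inv_cancel₀ hpos.ne', one_mul]
    rw [h3]
    simpa using h2.const_mul (‖f‖ + 1)
  intro f hf
  have hφnn : ∀ (g : E →L[ℝ] ℝ) (n : ℕ), 0 ≤ dAbs g |x n| :=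
    fun g n => dAbs_nonneg' g (abs_nonneg _)
  have hφle : ∀ (g : E →L[ℝ] ℝ), ‖g‖ ≤ 1 → ∀ n, dAbs g |x n| ≤ C := by
    intro g hg n
    calc dAbs g |x n| ≤ ‖g‖ * ‖(|x n|)‖ := dAbs_le_norm g (abs_nonneg _)
      _ = ‖g‖ * ‖x n‖ := by rw [norm_abs_eq_norm]
      _ ≤ 1 * C := mul_le_mul hg (hCx n) (norm_nonneg _) (by norm_num)
      _ = C := one_mul C
  rw [Metric.tendsto_atTop]
  intro δ hδ
  by_contra hcon
  push_neg at hcon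
  have hfreq : ∀ N, ∃ n, N ≤ n ∧ δ ≤ dAbs f |x n| := by
    intro N
    obtain ⟨n, hn1, hn2⟩ := hcon N
    refine ⟨n, hn1, ?_⟩
    rwa [Real.dist_eq, sub_zero, abs_of_nonneg (hφnn f n)] at hn2
  obtain ⟨nk, hmono, hnk⟩ := extraction_of_frequently_atTop
    (frequently_atTop.2 hfreq : ∃ᶠ n in atTop, δ ≤ dAbs f |x n|)
  haveI hXbne : Nonempty {hh : E →L[ℝ] ℝ // ‖hh‖ ≤ 1} := ⟨⟨0, by simp⟩⟩
  set F : ℕ → {hh : E →L[ℝ] ℝ // ‖hh‖ ≤ 1} → ℝ :=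
    fun k hh => dAbs hh.1 |x (nk k)| with hF_def
  have hMF : ∀ k hh, |F k hh| ≤ C := by
    intro k hh
    rw [hF_def]
    dsimp only
    rw [abs_of_nonneg (hφnn hh.1 (nk k))]
    exact hφle hh.1 hh.2 (nk k)
  have hAttain : ∀ l : ℕ → ℝ, (∀ n, 0 ≤ l n) → HasSum l 1 →
      ∃ b ∈ {hh : {hh : E →L[ℝ] ℝ // ‖hh‖ ≤ 1} | hh.1 ∈ B},
        ∀ y, (∑' n, l n * F n y) ≤ ∑' n, l n * F n b := by
    intro l hl0 hl1
    set z : E := ∑' k, l k • |x (nk k)| with hz_def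
    have habsnn : ∀ k, (0:E) ≤ |x (nk k)| := fun k => abs_nonneg _
    have hnormb : ∀ k, ‖(|x (nk k)|)‖ ≤ C := fun k => by
      rw [norm_abs_eq_norm]
      exact hCx _
    have hzrep : ∀ (g : E →L[ℝ] ℝ), dAbs g z = ∑' k, l k * dAbs g |x (nk k)| := fun g =>
      dAbs_tsum g l (fun k => |x (nk k)|) C hl0 hl1.summable habsnn hnormb
    have hznn : 0 ≤ z := tsum_nonneg (fun k => rsmul_nonneg (hl0 k) (habsnn k))
    obtain ⟨g, hgB, hgz⟩ := hB z
    rw [abs_of_nonneg hznn] at hgz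
    refine ⟨⟨g, hB1 g hgB⟩, hgB, ?_⟩
    intro y
    have h1 : ∑' k, l k * F k y = dAbs y.1 z := by
      rw [hzrep y.1, hF_def]
    have h2 : (∑' k, l k * F k (⟨g, hB1 g hgB⟩ : {hh : E →L[ℝ] ℝ // ‖hh‖ ≤ 1}))
        = dAbs g z := by
      rw [hzrep g, hF_def]
    rw [h1, h2]
    calc dAbs y.1 z ≤ ‖y.1‖ * ‖z‖ := dAbs_le_norm y.1 hznn
      _ ≤ 1 * ‖z‖ := mul_le_mul_of_nonneg_right y.2 (norm_nonneg z)
      _ = ‖z‖ := one_mul _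
      _ = dAbs g z := hgz.symm
  have hR : ∀ l : ℕ → ℝ, (∀ n, 0 ≤ l n) → HasSum l 1 →
      ∃ y, δ ≤ ∑' n, l n * F n y := by
    intro l hl0 hl1
    refine ⟨⟨f, hf⟩, ?_⟩
    have hsum1 : Summable (fun k => l k * F k (⟨f, hf⟩ : {hh : E →L[ℝ] ℝ // ‖hh‖ ≤ 1})) := by
      apply Summable.of_nonneg_of_le
        (fun k => mul_nonneg (hl0 k) (by rw [hF_def]; exact hφnn f (nk k)))
        (fun k => ?_) (hl1.summable.mul_right C)
      refine mul_le_mul_of_nonneg_left ?_ (hl0 k)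
      rw [hF_def]
      exact hφle f hf (nk k)
    calc δ = ∑' k, l k * δ := by rw [tsum_mul_right, hl1.tsum_eq, one_mul]
      _ ≤ ∑' k, l k * F k ⟨f, hf⟩ := by
          apply Summable.tsum_le_tsum _ (hl1.summable.mul_right δ) hsum1
          intro k
          refine mul_le_mul_of_nonneg_left ?_ (hl0 k)
          rw [hF_def]
          exact hnk k
  obtain ⟨b, hbB, hb⟩ := simons_aux F {hh : {hh : E →L[ℝ] ℝ // ‖hh‖ ≤ 1} | hh.1 ∈ B}
    C δ (δ/2) (by positivity) hMF hAttain hR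
  have htb := h b.1 hbB
  have htb2 : Tendsto (fun k => dAbs b.1 |x (nk k)|) atTop (𝓝 0) :=
    htb.comp hmono.tendsto_atTop
  obtain ⟨N, hN⟩ := (Metric.tendsto_atTop.1 htb2) (δ/4) (by positivity)
  have hN' : ∀ k, N ≤ k → F k b ≤ δ/4 := by
    intro k hk
    have h12 := hN k hk
    rw [Real.dist_eq, sub_zero, abs_of_nonneg (hφnn b.1 (nk k))] at h12
    rw [hF_def]
    exact h12.le
  have h13 := hb (δ/4) N hN'
  linarith
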